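/- As formal power series over ℚ, the generating function c(X) of the Catalan numbers satisfies (1/(1−X))·c(σX/(1−X)²) = Σ_{n≥0} (Σ_{k=0}^{n} C(n+k, n−k)·Cat(k)·σ^k)·X^n, i.e., the coefficient of X^n in c(X/(1−X)²) composed appropriately equals Σ_{k=0}^{n} C(n+k, n−k)·Cat(k)·σ^k. -/

import Mathlib

open PowerSeries Finset

private lemma sum_choose_aux (n d : ℕ) :
    ∑ m ∈ Finset.Icc (d + 1) n, ((m + d).choose (2 * d + 1)) =
      (n + d + 1).choose (2 * d + 2) := by
  have h : ∑ m ∈ Finset.Icc (d + 1) n, ((m + d).choose (2 * d + 1))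
      = ∑ j ∈ Finset.Icc (2 * d + 1) (n + d), j.choose (2 * d + 1) := by
    refine Finset.sum_nbij' (fun m => m + d) (fun j => j - d) ?_ ?_ ?_ ?_ ?_ <;>
      intros <;> simp_all <;> omega
  rw [h, Nat.sum_Icc_choose]

/-- In ℚ[σ][[X]], the formal identity (1/(1-X))·c(σX/(1-X)²)
= Σ_{n≥0} (Σ_{k=0}^{n} C(n+k, n-k)·Cat(k)·σ^k)·X^n, where c is the Catalan generating
function.  Since a := σX/(1-X)² has zero constant term, the composition c(a) is the
power series whose n-th coefficient is Σ_{k=0}^{n} Cat(k)·(coefficient of X^n in a^k). -/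
theorem stmt8 :
    let R := Polynomial ℚ
    let u : PowerSeries R := PowerSeries.invOfUnit (1 - PowerSeries.X) 1
    let a : PowerSeries R := PowerSeries.C Polynomial.X * PowerSeries.X * u ^ 2
    let ca : PowerSeries R := PowerSeries.mk (fun n =>
      ∑ k ∈ Finset.range (n + 1), (catalan k : R) * PowerSeries.coeff n (a ^ k))
    ∀ n : ℕ, PowerSeries.coeff n (u * ca) =
      ∑ k ∈ Finset.range (n + 1),
        Polynomial.C ((Nat.choose (n + k) (n - k) * catalan k : ℚ)) * Polynomial.X ^ k := by
  intro R u a ca n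
  have hmul : (1 - X : PowerSeries R) * u = 1 :=
    mul_invOfUnit _ 1 (by simp)
  have hXne : (1 - X : PowerSeries R) ≠ 0 := fun h => by
    simpa using congrArg (coeff 1) h
  have hk : ∀ k, u ^ k = ((invOneSubPow R k : (PowerSeries R)ˣ) : PowerSeries R) := by
    intro k
    have h1 : (1 - X : PowerSeries R) ^ k * u ^ k = 1 := by
      rw [← mul_pow, hmul, one_pow]
    have h2 : (1 - X : PowerSeries R) ^ k *
        ((invOneSubPow R k : (PowerSeries R)ˣ) : PowerSeries R) = 1 := by
      rw [← invOneSubPow_inv_eq_one_sub_pow]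
      exact (invOneSubPow R k).inv_val
    exact mul_left_cancel₀ (pow_ne_zero _ hXne) (h1.trans h2.symm)
  have hcu : ∀ m, coeff m u = 1 := by
    intro m
    have h1 := hk 1
    rw [pow_one] at h1
    rw [h1, show (1 : ℕ) = 0 + 1 from rfl, invOneSubPow_val_succ_eq_mk_add_choose, coeff_mk]
    simp
  -- coefficients of a ^ (d+1)
  have hca : ∀ m d, coeff m (a ^ (d + 1)) =
      Polynomial.X ^ (d + 1) *
        (if d + 1 ≤ m then (((m + d).choose (2 * d + 1) : ℕ) : R) else 0) := by
    intro m d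
    have ha : a ^ (d + 1) = PowerSeries.C (Polynomial.X ^ (d + 1)) *
        (X ^ (d + 1) * ((invOneSubPow R (2 * (d + 1)) : (PowerSeries R)ˣ) : PowerSeries R)) := by
      show (PowerSeries.C Polynomial.X * X * u ^ 2) ^ (d + 1) = _
      rw [mul_pow, mul_pow, ← pow_mul, mul_comm 2 (d + 1), pow_mul, ← pow_mul u,
        mul_comm (d + 1) 2, hk, map_pow, mul_assoc]
    rw [ha, coeff_C_mul]
    by_cases h : d + 1 ≤ m
    · obtain ⟨j, rfl⟩ := Nat.exists_eq_add_of_le h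
      rw [if_pos h, add_comm (d + 1) j, coeff_X_pow_mul]
      have h2 : 2 * (d + 1) = (2 * d + 1) + 1 := by ring
      rw [h2, invOneSubPow_val_succ_eq_mk_add_choose, coeff_mk,
        show j + (d + 1) + d = 2 * d + 1 + j from by omega]
    · rw [if_neg h, mul_zero]
      have hdvd : (X : PowerSeries R) ^ (d + 1) ∣
          X ^ (d + 1) * ((invOneSubPow R (2 * (d + 1)) : (PowerSeries R)ˣ) : PowerSeries R) :=
        ⟨_, rfl⟩
      rw [(X_pow_dvd_iff.mp hdvd) m (by omega), mul_zero]
  -- step 1: coeff of u * ca is the partial-sum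
  have hstep1 : coeff n (u * ca) = ∑ m ∈ Finset.range (n + 1), coeff m ca := by
    rw [coeff_mul,
      Finset.Nat.sum_antidiagonal_eq_sum_range_succ (fun i j => coeff i u * coeff j ca) n]
    simp only [hcu, one_mul]
    rw [← Finset.sum_range_reflect (fun m => coeff m ca) (n + 1)]
    exact Finset.sum_congr rfl fun i hi => by simp
  rw [hstep1]
  -- step 2: extend the inner sums and swap
  have hzero : ∀ m k, m < k → coeff m (a ^ k) = 0 := by
    intro m k hmk
    obtain ⟨d, rfl⟩ : ∃ d, k = d + 1 := ⟨k - 1, by omega⟩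
    rw [hca m d, if_neg (by omega), mul_zero]
  have hstep2 : ∀ m ∈ Finset.range (n + 1), coeff m ca =
      ∑ k ∈ Finset.range (n + 1), (catalan k : R) * coeff m (a ^ k) := by
    intro m hm
    rw [show coeff m ca = ∑ k ∈ Finset.range (m + 1),
      (catalan k : R) * coeff m (a ^ k) from coeff_mk _ _]
    refine Finset.sum_subset (Finset.range_subset_range.mpr (by simp at hm ⊢; omega)) ?_
    intro k hk hk'
    rw [hzero m k (by simp at hk'; omega), mul_zero]
  rw [Finset.sum_congr rfl hstep2, Finset.sum_comm]
  refine Finset.sum_congr rfl ?_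
  intro k hkmem
  have hkn : k ≤ n := by simp at hkmem; omega
  rcases Nat.eq_zero_or_pos k with hk0 | hkpos
  · subst hk0
    simp only [pow_zero, catalan_zero, Nat.cast_one, one_mul, coeff_one]
    simp only [mul_ite, mul_one, mul_zero, Finset.sum_ite_eq', Finset.mem_range]
    simp [Nat.choose_self]
    exact Nat.cast_one
  · obtain ⟨d, rfl⟩ : ∃ d, k = d + 1 := ⟨k - 1, by omega⟩
    simp only [hca]
    rw [← Finset.mul_sum, ← Finset.mul_sum]
    have hfil : ∑ m ∈ Finset.range (n + 1),
        (if d + 1 ≤ m then (((m + d).choose (2 * d + 1) : ℕ) : R) else 0)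
        = ((((n + d + 1).choose (2 * d + 2) : ℕ)) : R) := by
      rw [← Finset.sum_filter,
        show Finset.filter (fun m => d + 1 ≤ m) (Finset.range (n + 1)) = Finset.Icc (d + 1) n
          from by ext m; simp; omega,
        ← Nat.cast_sum, sum_choose_aux]
    have hsymm2 : (n + d + 1).choose (2 * d + 2) = (n + (d + 1)).choose (n - (d + 1)) := by
      rw [show n + d + 1 = n + (d + 1) from by omega,
        show 2 * d + 2 = (n + (d + 1)) - (n - (d + 1)) from by omega]
      exact Nat.choose_symm (by omega)
    rw [hfil, hsymm2]
    simp only [map_mul, map_natCast]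
    ring
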